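/- Let K ⊆ ℝ² be a strictly convex body with 0 in its interior, whose boundary is a C²-smooth curve with strictly positive curvature, and let g_K be the gauge of K. Let A : ℝ² → ℝ² be a linear map of exact order k ≥ 3 with A(K) = K, let m be a natural number coprime to k, and set B = A^m. Define a = 1 if k ≡ 2 (mod 4), a = 2 if k ≡ 0 (mod 4), and a = 4 if k is odd. Then the function x ↦ g_K(B(x) − x) is constant on the boundary of K if and only if there exists a linear map C : ℝ² → ℝ² of exact order a·k such that C∘A = A∘C and C(K) = K. -/

import Mathlib

open Polynomial

namespace Stmt13Aux


lemma lm_apply (f : (ℝ × ℝ) →ₗ[ℝ] (ℝ × ℝ)) (v : ℝ × ℝ) :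
    f v = v.1 • f (1,0) + v.2 • f (0,1) := by
  have h : f v = f (v.1 • (1,0) + v.2 • (0,1)) := by
    congr 1
    simp [Prod.ext_iff]
  rw [h, map_add, map_smul, map_smul]

lemma lm_ext {f g : (ℝ × ℝ) →ₗ[ℝ] (ℝ × ℝ)} (h1 : f (1,0) = g (1,0)) (h2 : f (0,1) = g (0,1)) :
    f = g := by
  refine LinearMap.ext fun v => ?_
  rw [lm_apply f, lm_apply g, h1, h2]

-- Cayley–Hamilton in dimension 2
lemma ch2 (f : (ℝ × ℝ) →ₗ[ℝ] (ℝ × ℝ)) :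
    f * f = ((f (1,0)).1 + (f (0,1)).2) • f
      - ((f (1,0)).1 * (f (0,1)).2 - (f (1,0)).2 * (f (0,1)).1) • (1 : (ℝ × ℝ) →ₗ[ℝ] (ℝ × ℝ)) := by
  apply lm_ext
  · simp only [Module.End.mul_apply, LinearMap.sub_apply, LinearMap.smul_apply, Module.End.one_apply]
    rw [lm_apply f (f (1,0))]
    simp only [Prod.ext_iff, Prod.smul_def, Prod.fst_add, Prod.snd_add, smul_eq_mul,
      Prod.fst_sub, Prod.snd_sub]
    constructor <;> ring
  · simp only [Module.End.mul_apply, LinearMap.sub_apply, LinearMap.smul_apply, Module.End.one_apply]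
    rw [lm_apply f (f (0,1))]
    simp only [Prod.ext_iff, Prod.smul_def, Prod.fst_add, Prod.snd_add, smul_eq_mul,
      Prod.fst_sub, Prod.snd_sub]
    constructor <;> ring

open Polynomial

-- unipotent lemma
lemma unip (B : (ℝ × ℝ) →ₗ[ℝ] (ℝ × ℝ)) (n : ℕ) (hN : (B - 1) * (B - 1) = 0)
    (hB : B ^ n = 1) (hn : n ≠ 0) : B = 1 := by
  have key : ∀ j : ℕ, B ^ j = 1 + (j : ℝ) • (B - 1) := by
    intro j
    induction j with
    | zero => simp
    | succ j ih =>
      have hBe : B = 1 + (B - 1) := by abel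
      rw [pow_succ, ih]
      nth_rewrite 2 [hBe]
      push_cast
      rw [add_mul, one_mul, smul_mul_assoc, mul_add, mul_one, hN]
      rw [smul_add, smul_zero, add_zero, add_smul, one_smul]
      abel
  have h1 : (1 : (ℝ × ℝ) →ₗ[ℝ] (ℝ × ℝ)) + (n : ℝ) • (B - 1) = 1 := by rw [← key, hB]
  have h2 : (n : ℝ) • (B - 1) = 0 := by
    have := h1
    abel_nf at this ⊢
    simpa using this
  rcases smul_eq_zero.1 h2 with h | h
  · exact absurd h (by exact_mod_cast hn)
  · have hB1 : B - 1 = 0 := h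
    have : B = 1 := by
      have := congrArg (· + (1 : (ℝ × ℝ) →ₗ[ℝ] (ℝ × ℝ))) hB1
      simpa [sub_add_cancel] using this
    exact this

open Polynomial

lemma poly_step (k : ℕ) (hk : 3 ≤ k) (A : (ℝ × ℝ) →ₗ[ℝ] (ℝ × ℝ))
    (hAk : A ^ k = 1) (hAj : ∀ j : ℕ, 0 < j → j < k → A ^ j ≠ 1)
    (τ δ : ℝ) (hCH : A * A = τ • A - δ • 1) :
    ∀ z : ℂ, z * z = (τ : ℂ) * z - (δ : ℂ) → z ^ k = 1 := by
  classical
  have hk0 : k ≠ 0 := by omega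
  have hdeglin : (C (-τ) * X + C δ).degree < ((2 : ℕ) : WithBot ℕ) :=
    lt_of_le_of_lt degree_linear_le (by norm_cast)
  have hfm : Monic (X ^ 2 + (C (-τ) * X + C δ)) := monic_X_pow_add hdeglin
  have haf : aeval A (X ^ 2 + (C (-τ) * X + C δ)) = 0 := by
    simp only [map_add, map_mul, map_pow, aeval_X, aeval_C]
    rw [pow_two, hCH, Algebra.algebraMap_eq_smul_one, Algebra.algebraMap_eq_smul_one,
      smul_mul_assoc, one_mul]
    module
  obtain ⟨r₁, r₀, hAr, heval⟩ : ∃ r₁ r₀ : ℝ, A ^ k = r₁ • A + r₀ • 1 ∧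
      ∀ z : ℂ, z * z = (τ : ℂ) * z - (δ : ℂ) → z ^ k = (r₁ : ℂ) * z + (r₀ : ℂ) := by
    have hdiv : (X ^ k : ℝ[X]) = (X ^ k) %ₘ (X ^ 2 + (C (-τ) * X + C δ))
        + (X ^ 2 + (C (-τ) * X + C δ)) * ((X ^ k) /ₘ (X ^ 2 + (C (-τ) * X + C δ))) :=
      (modByMonic_add_div (X ^ k) _).symm
    have hdegr : ((X ^ k) %ₘ (X ^ 2 + (C (-τ) * X + C δ))).degree ≤ 1 := by
      have h2 : (X ^ 2 + (C (-τ) * X + C δ)).degree = 2 := by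
        rw [degree_add_eq_left_of_degree_lt (by simpa [degree_X_pow] using hdeglin)]
        simp [degree_X_pow]
      have := degree_modByMonic_lt (X ^ k) hfm
      rw [h2] at this
      exact Order.le_of_lt_succ (by exact_mod_cast this)
    obtain ⟨r₁, r₀, hrXC⟩ : ∃ r₁ r₀ : ℝ,
        (X ^ k) %ₘ (X ^ 2 + (C (-τ) * X + C δ)) = C r₁ * X + C r₀ :=
      ⟨_, _, eq_X_add_C_of_degree_le_one hdegr⟩
    rw [hrXC] at hdiv
    refine ⟨r₁, r₀, ?_, ?_⟩
    · have h1 : aeval A (X ^ k : ℝ[X]) = A ^ k := by simp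
      rw [hdiv, map_add, map_mul, haf, zero_mul, add_zero] at h1
      rw [← h1]
      simp only [map_add, map_mul, aeval_X, aeval_C]
      rw [Algebra.algebraMap_eq_smul_one, Algebra.algebraMap_eq_smul_one,
        smul_mul_assoc, one_mul]
    · intro z hz
      have hzf : aeval z (X ^ 2 + (C (-τ) * X + C δ)) = 0 := by
        simp only [map_add, map_mul, map_pow, aeval_X, aeval_C]
        rw [pow_two, hz]
        simp only [Algebra.algebraMap_eq_smul_one, Complex.real_smul, mul_one,
          Complex.ofReal_neg]
        ring
      have h1 : aeval z (X ^ k : ℝ[X]) = z ^ k := by simp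
      rw [hdiv, map_add, map_mul, hzf, zero_mul, add_zero] at h1
      rw [← h1]
      simp [Algebra.algebraMap_eq_smul_one, Complex.real_smul]
  -- rule out scalar A
  have hscalar : ∀ c : ℝ, A ≠ c • 1 := by
    intro c hc
    have hck : c ^ k = 1 := by
      have h : A ^ k = c ^ k • 1 := by rw [hc, _root_.smul_pow, one_pow]
      rw [hAk] at h
      have := congrArg (fun g : (ℝ × ℝ) →ₗ[ℝ] (ℝ × ℝ) => (g (1, 0)).1) h
      simpa using this.symm
    have habs : |c| = 1 := by
      have h1 : |c| ^ k = 1 := by rw [← abs_pow, hck, abs_one]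
      rcases lt_trichotomy |c| 1 with h | h | h
      · exact absurd h1 (by nlinarith [pow_lt_one₀ (abs_nonneg c) h hk0])
      · exact h
      · exact absurd h1 (by nlinarith [one_lt_pow₀ h hk0])
    rcases abs_eq (by norm_num : (0:ℝ) ≤ 1) |>.1 habs with h | h
    · exact hAj 1 one_pos (by omega) (by simpa [h] using hc)
    · refine hAj 2 two_pos (by omega) ?_
      rw [pow_two, hc, h, smul_mul_smul_comm, one_mul]
      norm_num
  have hc1 : r₁ = 0 := by
    by_contra h
    apply hscalar ((1 - r₀) / r₁)
    have h0 := hAr.symm.trans hAk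
    have h2 : r₁ • A = 1 - r₀ • 1 := by rw [eq_sub_iff_add_eq]; exact h0
    calc A = r₁⁻¹ • (r₁ • A) := by rw [smul_smul, inv_mul_cancel₀ h, one_smul]
    _ = ((1 - r₀) / r₁) • 1 := by
        rw [h2, div_eq_inv_mul]
        module
  have hc0 : r₀ = 1 := by
    have h0 := hAr.symm.trans hAk
    rw [hc1, zero_smul, zero_add] at h0
    have := congrArg (fun g : (ℝ × ℝ) →ₗ[ℝ] (ℝ × ℝ) => (g (1, 0)).1) h0
    simpa using this
  intro z hz
  rw [heval z hz, hc1, hc0]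
  simp


-- positive real with t ^ k = 1 is 1
lemma real_pow_eq_one {t : ℝ} {k : ℕ} (ht : 0 ≤ t) (hk : k ≠ 0) (h : t ^ k = 1) : t = 1 := by
  rcases lt_trichotomy t 1 with h' | h' | h'
  · nlinarith [pow_lt_one₀ ht h' hk]
  · exact h'
  · nlinarith [one_lt_pow₀ h' hk]

lemma key_quad (k : ℕ) (hk : 3 ≤ k) (A : (ℝ × ℝ) →ₗ[ℝ] (ℝ × ℝ))
    (hAk : A ^ k = 1) (hAj : ∀ j : ℕ, 0 < j → j < k → A ^ j ≠ 1) :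
    ∃ τ : ℝ, A * A = τ • A - (1 : (ℝ × ℝ) →ₗ[ℝ] (ℝ × ℝ)) ∧ τ ^ 2 < 4 ∧
      ∃ lam : ℂ, 0 < lam.im ∧ lam * lam = (τ : ℂ) * lam - 1 ∧ lam ^ k = 1 := by
  obtain ⟨τ, δ, hCH⟩ : ∃ τ δ : ℝ, A * A = τ • A - δ • 1 := ⟨_, _, ch2 A⟩
  have hroot := poly_step k hk A hAk hAj τ δ hCH
  have hk0 : k ≠ 0 := by omega
  -- the discriminant is negative
  have hdisc : τ ^ 2 - 4 * δ < 0 := by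
    by_contra hd
    push_neg at hd
    have hd' : 0 ≤ τ ^ 2 - 4 * δ := by linarith
    set s := Real.sqrt (τ ^ 2 - 4 * δ) with hs
    have hs2 : s ^ 2 = τ ^ 2 - 4 * δ := Real.sq_sqrt hd'
    have hpm : ∀ p : ℝ, p * p = τ * p - δ → p = 1 ∨ p = -1 := by
      intro p hp
      have : (p : ℂ) * p = (τ : ℂ) * p - δ := by exact_mod_cast hp
      have hpk : (p : ℂ) ^ k = 1 := hroot _ this
      have hpk' : p ^ k = 1 := by exact_mod_cast hpk
      have : |p| = 1 := real_pow_eq_one (abs_nonneg p) hk0 (by rw [← abs_pow, hpk', abs_one])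
      rcases abs_eq (by norm_num : (0:ℝ) ≤ 1) |>.1 this with h | h
      · exact Or.inl h
      · exact Or.inr h
    have hproot : ((τ + s)/2) * ((τ + s)/2) = τ * ((τ + s)/2) - δ := by nlinarith [hs2]
    have hproot' : ((τ - s)/2) * ((τ - s)/2) = τ * ((τ - s)/2) - δ := by nlinarith [hs2]
    have hsum : (τ + s)/2 + (τ - s)/2 = τ := by ring
    have hprod : ((τ + s)/2) * ((τ - s)/2) = δ := by nlinarith [hs2]
    rcases hpm _ hproot with h1 | h1 <;> rcases hpm _ hproot' with h2 | h2
    · -- τ = 2, δ = 1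
      have hτ : τ = 2 := by rw [← hsum, h1, h2]; norm_num
      have hδ : δ = 1 := by rw [← hprod, h1, h2]; norm_num
      have hN : (A - 1) * (A - 1) = 0 := by
        rw [sub_mul, mul_sub, mul_sub, hCH, hτ, hδ]
        simp only [mul_one, one_mul]
        module
      exact hAj 1 one_pos (by omega) (by simpa using unip A k hN hAk hk0)
    · -- τ = 0, δ = -1 : A^2 = 1
      have hτ : τ = 0 := by rw [← hsum, h1, h2]; norm_num
      have hδ : δ = -1 := by rw [← hprod, h1, h2]; norm_num
      refine hAj 2 two_pos (by omega) ?_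
      rw [pow_two, hCH, hτ, hδ]
      module
    · have hτ : τ = 0 := by rw [← hsum, h1, h2]; norm_num
      have hδ : δ = -1 := by rw [← hprod, h1, h2]; norm_num
      refine hAj 2 two_pos (by omega) ?_
      rw [pow_two, hCH, hτ, hδ]
      module
    · -- τ = -2, δ = 1 : (A^2 - 1)^2 = 0
      have hτ : τ = -2 := by rw [← hsum, h1, h2]; norm_num
      have hδ : δ = 1 := by rw [← hprod, h1, h2]; norm_num
      have hP : (A + 1) * (A + 1) = 0 := by
        rw [add_mul, mul_add, mul_add, hCH, hτ, hδ]
        simp only [mul_one, one_mul]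
        module
      have hN : (A * A - 1) * (A * A - 1) = 0 := by
        have hcomm : (A - 1) * (A + 1) = (A + 1) * (A - 1) := by
          rw [sub_mul, mul_add, mul_add, add_mul, mul_sub, mul_sub]
          simp only [mul_one, one_mul]
          abel
        have hfact : A * A - 1 = (A + 1) * (A - 1) := by
          rw [add_mul, mul_sub, mul_sub]
          simp only [mul_one, one_mul]
          abel
        have expand : (A * A - 1) * (A * A - 1)
            = ((A + 1) * (A + 1)) * ((A - 1) * (A - 1)) := by
          rw [hfact, mul_assoc, ← mul_assoc (A - 1), hcomm, mul_assoc, mul_assoc, ← mul_assoc]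
        rw [expand, hP, zero_mul]
      have hB : (A * A) ^ k = 1 := by
        rw [← pow_two, ← pow_mul, mul_comm 2 k, pow_mul, hAk, one_pow]
      exact hAj 2 two_pos (by omega) (by rw [pow_two]; exact unip (A * A) k hN hB hk0)
  -- now construct lam
  have hδpos : 0 < δ := by nlinarith [sq_nonneg τ]
  set b := Real.sqrt (4 * δ - τ ^ 2) / 2 with hb
  have hbpos : 0 < b := by
    apply div_pos _ two_pos
    exact Real.sqrt_pos.2 (by linarith)
  have hb2 : b ^ 2 = (4 * δ - τ ^ 2) / 4 := by
    rw [hb, div_pow, Real.sq_sqrt (by linarith)]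
    norm_num
  set lam : ℂ := ⟨τ / 2, b⟩ with hlam
  have him : lam.im = b := rfl
  have hre : lam.re = τ / 2 := rfl
  have hlam2 : lam * lam = (τ : ℂ) * lam - (δ : ℂ) := by
    apply Complex.ext
    · simp only [Complex.mul_re, Complex.sub_re, Complex.ofReal_re, Complex.ofReal_im, hre, him]
      nlinarith [hb2]
    · simp only [Complex.mul_im, Complex.sub_im, Complex.ofReal_re, Complex.ofReal_im, hre, him]
      ring
  have hlamk : lam ^ k = 1 := hroot lam hlam2
  have hδ1 : δ = 1 := by
    have hnorm : Complex.normSq lam = δ := by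
      simp only [Complex.normSq_apply, hre, him]
      nlinarith [hb2]
    have habs : ‖lam‖ ^ k = 1 := by
      rw [← norm_pow, hlamk, norm_one]
    have : ‖lam‖ = 1 := real_pow_eq_one (norm_nonneg _) hk0 habs
    rw [← hnorm, ← Complex.sq_norm, this, one_pow]
  refine ⟨τ, by rw [hCH, hδ1, one_smul], by nlinarith, lam, by rw [him]; exact hbpos, ?_, hlamk⟩
  rw [hlam2, hδ1]
  norm_num



noncomputable def psi (A : (ℝ × ℝ) →ₗ[ℝ] (ℝ × ℝ)) (lam : ℂ) (z : ℂ) :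
    (ℝ × ℝ) →ₗ[ℝ] (ℝ × ℝ) :=
  (z.re - (z.im / lam.im) * lam.re) • 1 + (z.im / lam.im) • A

section psi_lemmas
variable {A : (ℝ × ℝ) →ₗ[ℝ] (ℝ × ℝ)} {lam : ℂ} {τ : ℝ}

lemma psi_coord (him : lam.im ≠ 0) (x y : ℝ) :
    psi A lam ((x : ℂ) + (y : ℂ) * lam) = x • 1 + y • A := by
  unfold psi
  have hre : ((x : ℂ) + (y : ℂ) * lam).re = x + y * lam.re := by simp
  have him' : ((x : ℂ) + (y : ℂ) * lam).im = y * lam.im := by simp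
  rw [hre, him']
  rw [mul_div_assoc, div_self him, mul_one]
  ring_nf

lemma exists_coord (him : lam.im ≠ 0) (z : ℂ) : ∃ x y : ℝ, z = (x : ℂ) + (y : ℂ) * lam := by
  refine ⟨z.re - (z.im / lam.im) * lam.re, z.im / lam.im, ?_⟩
  apply Complex.ext
  · simp
  · simp [div_mul_cancel₀ _ him]

lemma psi_one (him : lam.im ≠ 0) : psi A lam 1 = 1 := by
  simpa using psi_coord (A := A) him 1 0

lemma psi_lam (him : lam.im ≠ 0) : psi A lam lam = A := by
  simpa using psi_coord (A := A) him 0 1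

lemma psi_mul (him : lam.im ≠ 0) (hA2 : A * A = τ • A - 1)
    (hlam2 : lam * lam = (τ : ℂ) * lam - 1) (z w : ℂ) :
    psi A lam (z * w) = psi A lam z * psi A lam w := by
  obtain ⟨x, y, rfl⟩ := exists_coord him z
  obtain ⟨x', y', rfl⟩ := exists_coord him w
  have hzw : ((x : ℂ) + (y : ℂ) * lam) * ((x' : ℂ) + (y' : ℂ) * lam)
      = ((x * x' - y * y' : ℝ) : ℂ) + ((x * y' + x' * y + τ * y * y' : ℝ) : ℂ) * lam := by
    push_cast
    linear_combination (y : ℂ) * (y' : ℂ) * hlam2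
  rw [hzw, psi_coord him, psi_coord him, psi_coord him]
  have expand : (x • (1 : (ℝ × ℝ) →ₗ[ℝ] (ℝ × ℝ)) + y • A) * (x' • 1 + y' • A)
      = (x * x') • 1 + (x * y' + x' * y) • A + (y * y') • (A * A) := by
    simp only [add_mul, mul_add, smul_mul_assoc, mul_smul_comm, one_mul, mul_one, smul_smul]
    module
  rw [expand, hA2]
  module

lemma psi_pow (him : lam.im ≠ 0) (hA2 : A * A = τ • A - 1)
    (hlam2 : lam * lam = (τ : ℂ) * lam - 1) (z : ℂ) (n : ℕ) :
    psi A lam (z ^ n) = (psi A lam z) ^ n := by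
  induction n with
  | zero => simpa using psi_one him
  | succ n ih => rw [pow_succ, pow_succ, psi_mul him hA2 hlam2, ih]

lemma psi_sub (z w : ℂ) : psi A lam (z - w) = psi A lam z - psi A lam w := by
  unfold psi
  simp only [Complex.sub_re, Complex.sub_im, sub_div]
  module

lemma psi_real_mul (z : ℂ) (r : ℝ) : psi A lam ((r : ℂ) * z) = r • psi A lam z := by
  unfold psi
  simp only [Complex.mul_re, Complex.mul_im, Complex.ofReal_re, Complex.ofReal_im]
  ring_nf
  module

end psi_lemmas



section
variable {A : (ℝ × ℝ) →ₗ[ℝ] (ℝ × ℝ)} {lam : ℂ} {τ : ℝ}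

-- second component of A(1,0) is nonzero
lemma snd_ne_zero (hA2 : A * A = τ • A - 1) (hτ : τ ^ 2 < 4) : (A (1,0)).2 ≠ 0 := by
  intro h
  have hv : A (1,0) = (A (1,0)).1 • ((1:ℝ), (0:ℝ)) := by
    apply Prod.ext
    · simp
    · simp [h]
  have h2 : (A * A) ((1:ℝ), (0:ℝ)) = τ • A (1,0) - ((1:ℝ), (0:ℝ)) := by
    rw [hA2]
    simp
  have h3 : (A * A) ((1:ℝ), (0:ℝ)) = (A (1,0)).1 • A (1,0) := by
    rw [Module.End.mul_apply]
    conv_lhs => rw [hv]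
    rw [map_smul]
  have h5 : (A (1,0)).1 • A (1,0) = τ • A (1,0) - ((1:ℝ), (0:ℝ)) := by rw [← h3, h2]
  have h6 := congrArg Prod.fst h5
  simp only [Prod.smul_fst, Prod.fst_sub, smul_eq_mul] at h6
  nlinarith [sq_nonneg (2 * (A (1,0)).1 - τ)]

-- decomposition in the basis (1,0), A(1,0)
lemma basis_decomp (hq : (A (1,0)).2 ≠ 0) (v : ℝ × ℝ) :
    v = (v.1 - v.2 * (A (1,0)).1 / (A (1,0)).2) • ((1:ℝ), (0:ℝ))
      + (v.2 / (A (1,0)).2) • A (1,0) := by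
  have hfst : ((v.1 - v.2 * (A (1,0)).1 / (A (1,0)).2) • ((1:ℝ), (0:ℝ))
      + (v.2 / (A (1,0)).2) • A (1,0)).1 = v.1 := by
    simp only [Prod.fst_add, Prod.smul_fst, smul_eq_mul]
    field_simp
    ring
  have hsnd : ((v.1 - v.2 * (A (1,0)).1 / (A (1,0)).2) • ((1:ℝ), (0:ℝ))
      + (v.2 / (A (1,0)).2) • A (1,0)).2 = v.2 := by
    simp only [Prod.snd_add, Prod.smul_snd, smul_eq_mul]
    field_simp
    ring
  exact (Prod.ext hfst.symm hsnd.symm : _)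

-- centralizer
lemma centralizer (him : lam.im ≠ 0) (hq : (A (1,0)).2 ≠ 0)
    (C : (ℝ × ℝ) →ₗ[ℝ] (ℝ × ℝ)) (hcomm : C * A = A * C) :
    ∃ z : ℂ, C = psi A lam z := by
  set p : ℝ := (A (1,0)).1
  set q : ℝ := (A (1,0)).2
  set y : ℝ := (C (1,0)).2 / q with hy
  set x : ℝ := (C (1,0)).1 - y * p with hx
  set D : (ℝ × ℝ) →ₗ[ℝ] (ℝ × ℝ) := C - x • 1 - y • A with hD
  have hD1 : D ((1:ℝ), (0:ℝ)) = 0 := by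
    rw [hD]
    simp only [LinearMap.sub_apply, LinearMap.smul_apply, Module.End.one_apply]
    have hfst : ((C ((1:ℝ),(0:ℝ))) - x • ((1:ℝ),(0:ℝ)) - y • A (1,0)).1 = 0 := by
      simp only [Prod.fst_sub, Prod.smul_fst, smul_eq_mul, hx]
      ring
    have hsnd : ((C ((1:ℝ),(0:ℝ))) - x • ((1:ℝ),(0:ℝ)) - y • A (1,0)).2 = 0 := by
      simp only [Prod.snd_sub, Prod.smul_snd, smul_eq_mul, hy]
      field_simp
      simp only [q]
      ring
    exact Prod.ext hfst hsnd
  have hDA : D * A = A * D := by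
    rw [hD, sub_mul, sub_mul, mul_sub, mul_sub, hcomm, smul_mul_assoc, mul_smul_comm,
      smul_mul_assoc, mul_smul_comm, one_mul, mul_one]
  have hD2 : D (A ((1:ℝ), (0:ℝ))) = 0 := by
    have h1 : (D * A) ((1:ℝ), (0:ℝ)) = (A * D) ((1:ℝ), (0:ℝ)) := by rw [hDA]
    rw [Module.End.mul_apply, Module.End.mul_apply, hD1, map_zero] at h1
    exact h1
  have hD0 : D = 0 := by
    refine LinearMap.ext fun v => ?_
    conv_lhs => rw [basis_decomp hq v]
    rw [map_add, map_smul, map_smul, hD1, hD2]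
    simp
  refine ⟨(x : ℂ) + (y : ℂ) * lam, ?_⟩
  rw [psi_coord him]
  have h0 : C - (x • 1 + y • A) = 0 := by rw [← hD0, hD]; abel
  exact sub_eq_zero.1 h0
end


section nt
variable {lam u : ℂ} {k m : ℕ}

lemma lam_half (hk0 : 0 < k) (hke : k % 2 = 0) (hord : orderOf lam = k) :
    lam ^ (k / 2) = -1 := by
  have h2 : 2 * (k / 2) = k := by omega
  have hx2 : (lam ^ (k / 2)) ^ 2 = 1 := by
    rw [← pow_mul, mul_comm, h2, ← hord, pow_orderOf_eq_one]
  have hx1 : lam ^ (k / 2) ≠ 1 := by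
    intro h
    have := orderOf_dvd_of_pow_eq_one h
    rw [hord] at this
    have := Nat.le_of_dvd (by omega) this
    omega
  have : (lam ^ (k / 2) - 1) * (lam ^ (k / 2) + 1) = 0 := by
    have := hx2
    linear_combination this
  rcases mul_eq_zero.1 this with h | h
  · exact absurd (by linear_combination h) hx1
  · linear_combination h

lemma m_odd (hke : k % 2 = 0) (hcop : m.Coprime k) : m % 2 = 1 := by
  rcases Nat.even_or_odd m with h | h
  · exfalso
    have h2 : (2:ℕ) ∣ Nat.gcd m k := Nat.dvd_gcd h.two_dvd (by omega)
    rw [hcop] at h2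
    omega
  · exact Nat.odd_iff.mp h

lemma u_sq_powers (hu2 : u ^ 2 = -lam ^ m) (j : ℕ) :
    u ^ (2 * j) = (-1) ^ j * lam ^ (m * j) := by
  rw [pow_mul, hu2, neg_pow, ← pow_mul]

end nt

section nt2
variable {lam u : ℂ} {k m : ℕ}

lemma hlamk_of_ord (hord : orderOf lam = k) : lam ^ k = 1 := by
  rw [← hord]; exact pow_orderOf_eq_one lam

lemma u_pow_4k (hord : orderOf lam = k) (hu2 : u ^ 2 = -lam ^ m) : u ^ (4 * k) = 1 := by
  have h : u ^ (2 * (2 * k)) = (-1) ^ (2 * k) * lam ^ (m * (2 * k)) := u_sq_powers hu2 _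
  rw [show 4 * k = 2 * (2 * k) by ring, h, Even.neg_one_pow ⟨k, by ring⟩,
    show m * (2 * k) = k * (2 * m) by ring, pow_mul, hlamk_of_ord hord, one_pow, one_mul]

lemma u_pow_2k_of_even (hke : k % 2 = 0) (hord : orderOf lam = k) (hu2 : u ^ 2 = -lam ^ m) :
    u ^ (2 * k) = 1 := by
  rw [u_sq_powers hu2 k, Even.neg_one_pow (Nat.even_iff.2 hke),
    show m * k = k * m by ring, pow_mul, hlamk_of_ord hord, one_pow, one_mul]

lemma u_pow_k_of_2mod4 (hk4 : k % 4 = 2) (hcop : m.Coprime k) (hord : orderOf lam = k)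
    (hu2 : u ^ 2 = -lam ^ m) : u ^ k = 1 := by
  have hm := m_odd (by omega) hcop
  have hhalf := lam_half (by omega) (by omega) hord
  have h : u ^ (2 * (k / 2)) = (-1) ^ (k / 2) * lam ^ (m * (k / 2)) := u_sq_powers hu2 _
  rw [show k = 2 * (k / 2) by omega]
  rw [h, show m * (k / 2) = (k / 2) * m by ring, pow_mul, hhalf,
    Odd.neg_one_pow (Nat.odd_iff.2 (by omega)), Odd.neg_one_pow (Nat.odd_iff.2 hm)]
  norm_num

lemma u_exact_odd (hk : 3 ≤ k) (hko : k % 2 = 1) (hcop : m.Coprime k)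
    (hord : orderOf lam = k) (hu2 : u ^ 2 = -lam ^ m) :
    ∀ j : ℕ, 0 < j → j < 4 * k → u ^ j ≠ 1 := by
  intro j hj0 hjlt hj1
  have hdvd : ∀ N, lam ^ N = 1 → k ∣ N := fun N h => hord ▸ orderOf_dvd_of_pow_eq_one h
  have h2j : (-1 : ℂ) ^ j * lam ^ (m * j) = 1 := by
    rw [← u_sq_powers hu2 j, mul_comm 2 j, pow_mul, hj1, one_pow]
  -- square it
  have hsq : lam ^ (j * (2 * m)) = 1 := by
    have := congrArg (fun t => t ^ 2) h2j
    simp only [mul_pow, ← pow_mul, one_pow] at this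
    rw [show j * 2 = 2 * j by ring, pow_mul] at this
    norm_num at this
    rw [show m * j * 2 = j * (2 * m) by ring] at this
    exact this
  have hcop2 : Nat.Coprime k 2 := ((Nat.prime_two.coprime_iff_not_dvd).mpr (by omega)).symm
  have hcopk2m : Nat.Coprime k (2 * m) := Nat.Coprime.mul_right hcop2 hcop.symm
  have hkj : k ∣ j := hcopk2m.dvd_of_dvd_mul_right (hdvd _ hsq)
  -- raise to k
  have hjk_even : (2 : ℕ) ∣ j := by
    have key : (-1 : ℂ) ^ (j * k) * lam ^ (m * (j * k)) = 1 := by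
      calc (-1 : ℂ) ^ (j * k) * lam ^ (m * (j * k)) = ((-1) ^ j * lam ^ (m * j)) ^ k := by
            rw [mul_pow, ← pow_mul, ← pow_mul, mul_assoc]
      _ = 1 := by rw [h2j, one_pow]
    rw [show m * (j * k) = k * (m * j) by ring, pow_mul, pow_mul, hlamk_of_ord hord, one_pow,
      mul_one] at key
    have key2 : (-1 : ℂ) ^ (j * k) = 1 := by rw [pow_mul]; exact key
    have hev : Even (j * k) := by
      by_contra hodd
      rw [Nat.not_even_iff_odd] at hodd
      rw [Odd.neg_one_pow hodd] at key2
      norm_num at key2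
    rcases Nat.even_mul.1 hev with h | h
    · exact h.two_dvd
    · exfalso; rw [Nat.even_iff] at h; omega
  have h2k : 2 * k ∣ j := Nat.Coprime.mul_dvd_of_dvd_of_dvd hcop2.symm hjk_even hkj
  obtain ⟨t, rfl⟩ := h2k
  have ht0 : t ≠ 0 := by rintro rfl; simp at hj0
  have ht : t = 1 := by
    by_contra hcon
    have h2 : 2 ≤ t := by omega
    have := Nat.mul_le_mul_left (2 * k) h2
    omega
  rw [ht, mul_one] at hj1
  have : u ^ (2 * k) = -1 := by
    rw [u_sq_powers hu2 k, show m * k = k * m by ring, pow_mul, hlamk_of_ord hord, one_pow,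
      mul_one, Odd.neg_one_pow (Nat.odd_iff.2 hko)]
  rw [hj1] at this
  norm_num at this

lemma u_exact_0mod4 (hk : 3 ≤ k) (hk4 : k % 4 = 0) (hcop : m.Coprime k)
    (hord : orderOf lam = k) (hu2 : u ^ 2 = -lam ^ m) :
    ∀ j : ℕ, 0 < j → j < 2 * k → u ^ j ≠ 1 := by
  intro j hj0 hjlt hj1
  have hdvd : ∀ N, lam ^ N = 1 → k ∣ N := fun N h => hord ▸ orderOf_dvd_of_pow_eq_one h
  have hm := m_odd (by omega) hcop
  have hhalf := lam_half (by omega) (by omega) hord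
  have h2j : (-1 : ℂ) ^ j * lam ^ (m * j) = 1 := by
    rw [← u_sq_powers hu2 j, mul_comm 2 j, pow_mul, hj1, one_pow]
  rw [← hhalf, ← pow_mul, ← pow_add] at h2j
  have hdj : k ∣ j * (k / 2 + m) := by
    apply hdvd
    rw [show j * (k / 2 + m) = k / 2 * j + m * j by ring]
    exact h2j
  have hcophalf : Nat.Coprime k (k / 2 + m) := by
    set g := Nat.gcd k (k / 2 + m) with hg
    have hg1 : g ∣ k := Nat.gcd_dvd_left _ _
    have hg2 : g ∣ k / 2 + m := Nat.gcd_dvd_right _ _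
    have hgodd : ¬ 2 ∣ g := by
      intro h2g
      have := Nat.dvd_trans h2g hg2
      omega
    have hcopg2 : Nat.Coprime 2 g := (Nat.prime_two.coprime_iff_not_dvd).mpr hgodd
    have hghalf : g ∣ k / 2 := by
      have : g ∣ 2 * (k / 2) := by rw [show 2 * (k / 2) = k by omega]; exact hg1
      exact (Nat.Coprime.dvd_of_dvd_mul_left hcopg2.symm this)
    have hgm : g ∣ m := (Nat.dvd_add_right hghalf).mp hg2
    have : g ∣ Nat.gcd m k := Nat.dvd_gcd hgm hg1
    rw [hcop] at this
    exact Nat.eq_one_of_dvd_one this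
  have hkj : k ∣ j := hcophalf.dvd_of_dvd_mul_right hdj
  obtain ⟨t, rfl⟩ := hkj
  have ht0 : t ≠ 0 := by rintro rfl; simp at hj0
  have ht : t = 1 := by
    by_contra hcon
    have h2 : 2 ≤ t := by omega
    have := Nat.mul_le_mul_left k h2
    omega
  rw [ht, mul_one] at hj1
  have : u ^ k = -1 := by
    have h : u ^ (2 * (k / 2)) = (-1) ^ (k / 2) * lam ^ (m * (k / 2)) := u_sq_powers hu2 _
    rw [show k = 2 * (k / 2) by omega, h, Even.neg_one_pow (Nat.even_iff.2 (by omega)),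
      show m * (k / 2) = k / 2 * m by ring, pow_mul, hhalf, Odd.neg_one_pow (Nat.odd_iff.2 hm)]
    norm_num
  rw [hj1] at this
  norm_num at this

end nt2



section ufacts
variable {lam : ℂ} {k m : ℕ}

lemma mu_ne_one (hk : 3 ≤ k) (hcop : m.Coprime k) (hord : orderOf lam = k) : lam ^ m ≠ 1 := by
  intro h
  have hdvd : k ∣ m := hord ▸ orderOf_dvd_of_pow_eq_one h
  have : k ∣ Nat.gcd m k := Nat.dvd_gcd hdvd dvd_rfl
  rw [hcop] at this
  have := Nat.eq_one_of_dvd_one this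
  omega

lemma r_pos (hk : 3 ≤ k) (hcop : m.Coprime k) (hord : orderOf lam = k) :
    0 < ‖lam ^ m - 1‖ := by
  rw [norm_pos_iff]
  rw [sub_ne_zero]
  exact mu_ne_one hk hcop hord

lemma abs_lam_one (hk : 3 ≤ k) (hord : orderOf lam = k) : ‖lam‖ = 1 := by
  have hl : lam ^ k = 1 := by rw [← hord]; exact pow_orderOf_eq_one lam
  have h : ‖lam‖ ^ k = 1 := by rw [← norm_pow, hl, norm_one]
  exact real_pow_eq_one (norm_nonneg _) (by omega) h

lemma u_squared (hk : 3 ≤ k) (hcop : m.Coprime k) (hord : orderOf lam = k) :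
    ((lam ^ m - 1) / ((‖lam ^ m - 1‖ : ℝ) : ℂ)) ^ 2 = -lam ^ m := by
  have hr := r_pos hk hcop hord
  have habs : ‖lam ^ m‖ = 1 := by
    rw [norm_pow, abs_lam_one hk hord, one_pow]
  have hconj : lam ^ m * (starRingEnd ℂ) (lam ^ m) = 1 := by
    rw [Complex.mul_conj]
    norm_cast
    rw [Complex.normSq_eq_norm_sq, habs, one_pow]
  have hrsq : (((‖lam ^ m - 1‖ : ℝ) : ℂ)) ^ 2
      = (lam ^ m - 1) * ((starRingEnd ℂ) (lam ^ m) - 1) := by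
    rw [← Complex.ofReal_pow, Complex.sq_norm, ← Complex.mul_conj]
    rw [map_sub, map_one]
  rw [div_pow, ← Complex.ofReal_pow]
  rw [eq_comm, eq_div_iff (by exact_mod_cast pow_ne_zero 2 hr.ne')]
  rw [Complex.ofReal_pow, hrsq]
  linear_combination -(lam ^ m - 1) * hconj
end ufacts


section geom
variable {K : Set (ℝ × ℝ)}

lemma gfront (hKcomp : IsCompact K) (hKconv : Convex ℝ K) (h0 : (0:ℝ×ℝ) ∈ interior K) (x : ℝ × ℝ) :
    x ∈ frontier K ↔ gauge K x = 1 :=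
  (gauge_eq_one_iff_mem_frontier hKconv (mem_interior_iff_mem_nhds.1 h0)).symm

lemma gzero (hKcomp : IsCompact K) (h0 : (0:ℝ×ℝ) ∈ interior K) (y : ℝ × ℝ) :
    gauge K y = 0 ↔ y = 0 := by
  apply gauge_eq_zero (absorbent_nhds_zero (mem_interior_iff_mem_nhds.1 h0))
  rw [NormedSpace.isVonNBounded_iff]
  exact hKcomp.isBounded

lemma gmem (hKcomp : IsCompact K) (hKconv : Convex ℝ K) (h0 : (0:ℝ×ℝ) ∈ interior K) (y : ℝ × ℝ) :
    y ∈ K ↔ gauge K y ≤ 1 := by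
  constructor
  · exact fun h => gauge_le_one_of_mem h
  · intro h
    have := (gauge_le_one_iff_mem_closure hKconv (mem_interior_iff_mem_nhds.1 h0)).1 h
    rwa [hKcomp.isClosed.closure_eq] at this

lemma frontier_nonempty (hKcomp : IsCompact K) (hKconv : Convex ℝ K)
    (h0 : (0:ℝ×ℝ) ∈ interior K) : ∃ x, x ∈ frontier K := by
  set v : ℝ × ℝ := (1, 0) with hv
  have hv0 : v ≠ 0 := by simp [hv, Prod.ext_iff]
  have hg : gauge K v ≠ 0 := fun h => hv0 ((gzero hKcomp h0 v).1 h)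
  have hgpos : 0 < gauge K v := lt_of_le_of_ne (gauge_nonneg v) (Ne.symm hg)
  refine ⟨(gauge K v)⁻¹ • v, (gfront hKcomp hKconv h0 _).2 ?_⟩
  rw [gauge_smul_of_nonneg (inv_nonneg.2 hgpos.le)]
  simp [inv_mul_cancel₀ hg]

lemma gscale (hKcomp : IsCompact K) (hKconv : Convex ℝ K) (h0 : (0:ℝ×ℝ) ∈ interior K)
    (T : (ℝ × ℝ) →ₗ[ℝ] (ℝ × ℝ)) (c : ℝ)
    (h : ∀ x ∈ frontier K, gauge K (T x) = c) (y : ℝ × ℝ) :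
    gauge K (T y) = c * gauge K y := by
  rcases eq_or_ne (gauge K y) 0 with hgy | hgy
  · have hy0 : y = 0 := (gzero hKcomp h0 y).1 hgy
    rw [hy0, map_zero, gauge_zero]
    simp
  · have hgpos : 0 < gauge K y := lt_of_le_of_ne (gauge_nonneg y) (Ne.symm hgy)
    have hx : (gauge K y)⁻¹ • y ∈ frontier K := by
      apply (gfront hKcomp hKconv h0 _).2
      rw [gauge_smul_of_nonneg (inv_nonneg.2 hgpos.le)]
      simp [inv_mul_cancel₀ hgy]
    have := h _ hx
    rw [map_smul, gauge_smul_of_nonneg (inv_nonneg.2 hgpos.le)] at this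
    simp only [smul_eq_mul] at this
    field_simp at this
    rw [mul_comm] at this ⊢
    rw [this, mul_comm]

lemma image_eq_of_gauge_eq (hKcomp : IsCompact K) (hKconv : Convex ℝ K)
    (h0 : (0:ℝ×ℝ) ∈ interior K) (T S : (ℝ × ℝ) →ₗ[ℝ] (ℝ × ℝ))
    (hTS : T * S = 1) (hgauge : ∀ y, gauge K (T y) = gauge K y) :
    T '' K = K := by
  ext z
  constructor
  · rintro ⟨w, hw, rfl⟩
    rw [gmem hKcomp hKconv h0, hgauge w]
    exact (gmem hKcomp hKconv h0 w).1 hw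
  · intro hz
    refine ⟨S z, ?_, ?_⟩
    · rw [gmem hKcomp hKconv h0]
      have h1 : T (S z) = z := by
        have := congrArg (fun f : (ℝ × ℝ) →ₗ[ℝ] (ℝ × ℝ) => f z) hTS
        simpa using this
      have := hgauge (S z)
      rw [h1] at this
      rw [← this]
      exact (gmem hKcomp hKconv h0 z).1 hz
    · have := congrArg (fun f : (ℝ × ℝ) →ₗ[ℝ] (ℝ × ℝ) => f z) hTS
      simpa using this

lemma frontier_map (T S : (ℝ × ℝ) →ₗ[ℝ] (ℝ × ℝ)) (hTS : T * S = 1) (hST : S * T = 1)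
    (hTK : T '' K = K) {x : ℝ × ℝ} (hx : x ∈ frontier K) : T x ∈ frontier K := by
  set e : (ℝ × ℝ) ≃ₗ[ℝ] (ℝ × ℝ) :=
    LinearEquiv.ofLinear T S (by rw [← Module.End.mul_eq_comp, hTS]; rfl)
      (by rw [← Module.End.mul_eq_comp, hST]; rfl) with he
  have hcont : Continuous (e : (ℝ × ℝ) → (ℝ × ℝ)) := e.toLinearMap.continuous_of_finiteDimensional
  have hconts : Continuous (e.symm : (ℝ × ℝ) → (ℝ × ℝ)) :=
    e.symm.toLinearMap.continuous_of_finiteDimensional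
  set homeo : (ℝ × ℝ) ≃ₜ (ℝ × ℝ) := ⟨e.toEquiv, hcont, hconts⟩ with hh
  have himg : homeo '' frontier K = frontier (homeo '' K) := homeo.image_frontier K
  have hK : homeo '' K = K := by
    have : (homeo : (ℝ × ℝ) → (ℝ × ℝ)) = T := rfl
    rw [this] ; exact hTK
  rw [hK] at himg
  have : T x ∈ homeo '' frontier K := ⟨x, hx, rfl⟩
  rwa [himg] at this

end geom



lemma psi_inj {A : (ℝ × ℝ) →ₗ[ℝ] (ℝ × ℝ)} {lam : ℂ} (him : lam.im ≠ 0)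
    (hq : (A (1,0)).2 ≠ 0) {z w : ℂ} (h : psi A lam z = psi A lam w) : z = w := by
  obtain ⟨x, y, rfl⟩ := exists_coord him z
  obtain ⟨x', y', rfl⟩ := exists_coord him w
  rw [psi_coord him, psi_coord him] at h
  have h1 := congrArg (fun f : (ℝ × ℝ) →ₗ[ℝ] (ℝ × ℝ) => f (1, 0)) h
  simp only [LinearMap.add_apply, LinearMap.smul_apply, Module.End.one_apply] at h1
  have hfst := congrArg Prod.fst h1
  have hsnd := congrArg Prod.snd h1
  simp only [Prod.fst_add, Prod.snd_add, Prod.smul_fst, Prod.smul_snd, smul_eq_mul] at hfst hsnd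
  have hy : y = y' := by
    field_simp at hsnd
    exact mul_right_cancel₀ hq (by linarith : y * (A (1,0)).2 = y' * (A (1,0)).2)
  have hx : x = x' := by
    rw [hy] at hfst
    simpa using hfst
  rw [hx, hy]


end Stmt13Aux

open Stmt13Aux

/-- The determinant of the 2×2 matrix whose columns are `u, v ∈ ℝ²`. -/
def det2 (u v : ℝ × ℝ) : ℝ := u.1 * v.2 - u.2 * v.1

theorem stmt_13 (K : Set (ℝ × ℝ)) (hKcomp : IsCompact K) (hKconv : Convex ℝ K)
    (hKstrict : StrictConvex ℝ K) (h0 : (0 : ℝ × ℝ) ∈ interior K)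
    -- the boundary is a C²-smooth curve with strictly positive curvature
    (γ : ℝ → ℝ × ℝ) (hγ : ContDiff ℝ 2 γ)
    (hper : ∀ t : ℝ, γ (t + 2 * Real.pi) = γ t)
    (hinj : Set.InjOn γ (Set.Ico 0 (2 * Real.pi)))
    (hreg : ∀ t : ℝ, deriv γ t ≠ 0)
    (hcurv : ∀ t : ℝ, 0 < det2 (deriv γ t) (deriv (deriv γ) t))
    (hbd : Set.range γ = frontier K)
    (k : ℕ) (hk : 3 ≤ k)
    (A : (ℝ × ℝ) →ₗ[ℝ] (ℝ × ℝ))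
    (hAk : A ^ k = 1) (hAj : ∀ j : ℕ, 0 < j → j < k → A ^ j ≠ 1)
    (hAK : A '' K = K)
    (m : ℕ) (hm : Nat.Coprime m k)
    (a : ℕ) (ha : a = if k % 4 = 2 then 1 else if k % 4 = 0 then 2 else 4) :
    (∃ c : ℝ, ∀ x ∈ frontier K, gauge K ((A ^ m) x - x) = c) ↔
      ∃ C : (ℝ × ℝ) →ₗ[ℝ] (ℝ × ℝ),
        C ^ (a * k) = 1 ∧ (∀ j : ℕ, 0 < j → j < a * k → C ^ j ≠ 1) ∧
        C ∘ₗ A = A ∘ₗ C ∧ C '' K = K := by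
  obtain ⟨τ, hA2, hτ, lam, hlamim, hlam2, hlamk⟩ := key_quad k hk A hAk hAj
  have him : lam.im ≠ 0 := ne_of_gt hlamim
  have hord : orderOf lam = k := by
    rw [orderOf_eq_iff (by omega : 0 < k)]
    refine ⟨hlamk, fun j hjlt hj0 hje => hAj j hj0 hjlt ?_⟩
    have h2 : psi A lam (lam ^ j) = psi A lam 1 := by rw [hje]
    rwa [psi_pow him hA2 hlam2, psi_lam him, psi_one him] at h2
  have hq := snd_ne_zero hA2 hτ
  have hrpos : 0 < ‖lam ^ m - 1‖ := r_pos hk hm hord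
  set r : ℝ := ‖lam ^ m - 1‖ with hrdef
  set u : ℂ := (lam ^ m - 1) / (r : ℂ) with hudef
  have hu2 : u ^ 2 = -lam ^ m := u_squared hk hm hord
  have hrne : (r : ℂ) ≠ 0 := by exact_mod_cast hrpos.ne'
  have hur : lam ^ m - 1 = (r : ℂ) * u := by
    rw [hudef]
    field_simp
  have hAmr : A ^ m - 1 = r • psi A lam u := by
    have h1 : A ^ m = psi A lam (lam ^ m) := by rw [psi_pow him hA2 hlam2, psi_lam him]
    calc A ^ m - 1 = psi A lam (lam ^ m) - psi A lam 1 := by rw [h1, psi_one him]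
    _ = psi A lam (lam ^ m - 1) := (psi_sub _ _).symm
    _ = psi A lam ((r : ℂ) * u) := by rw [← hur]
    _ = r • psi A lam u := psi_real_mul _ _
  have happly : ∀ x : ℝ × ℝ, (A ^ m) x - x = r • (psi A lam u) x := by
    intro x
    have h := congrArg (fun f : (ℝ × ℝ) →ₗ[ℝ] (ℝ × ℝ) => f x) hAmr
    simpa using h
  constructor
  · rintro ⟨c, hc⟩
    by_cases hk2 : k % 4 = 2
    · refine ⟨A, ?_, ?_, rfl, hAK⟩
      · rw [ha, if_pos hk2, one_mul]; exact hAk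
      · rw [ha, if_pos hk2, one_mul]; exact hAj
    · obtain ⟨x₀, hx₀⟩ := frontier_nonempty hKcomp hKconv h0
      have hcr : ∀ x ∈ frontier K, gauge K ((psi A lam u) x) = c / r := by
        intro x hx
        have h1 := hc x hx
        rw [happly x, gauge_smul_of_nonneg hrpos.le, smul_eq_mul] at h1
        rw [eq_div_iff hrpos.ne']
        linear_combination h1
      have hscale := gscale hKcomp hKconv h0 (psi A lam u) (c / r) hcr
      have hpowscale : ∀ n : ℕ, ∀ y, gauge K (((psi A lam u) ^ n) y)
          = (c / r) ^ n * gauge K y := by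
        intro n
        induction n with
        | zero => intro y; simp
        | succ n ih =>
          intro y
          rw [pow_succ, Module.End.mul_apply, ih, hscale y, pow_succ]
          ring
      have hpsi4k : (psi A lam u) ^ (4 * k) = 1 := by
        rw [← psi_pow him hA2 hlam2, u_pow_4k hord hu2, psi_one him]
      have hgx₀ : gauge K x₀ = 1 := (gfront hKcomp hKconv h0 x₀).1 hx₀
      have hcrpow : (c / r) ^ (4 * k) = 1 := by
        have h1 := hpowscale (4 * k) x₀
        rw [hpsi4k, hgx₀, mul_one] at h1
        simp only [Module.End.one_apply] at h1
        rw [hgx₀] at h1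
        exact h1.symm
      have hcge : 0 ≤ c := by
        have h := hc x₀ hx₀
        rw [← h]
        exact gauge_nonneg _
      have hcr1 : c / r = 1 := real_pow_eq_one (div_nonneg hcge hrpos.le) (by omega) hcrpow
      have hgeq : ∀ y, gauge K ((psi A lam u) y) = gauge K y := by
        intro y
        rw [hscale y, hcr1, one_mul]
      have hTS : (psi A lam u) * (psi A lam u) ^ (4 * k - 1) = 1 := by
        calc (psi A lam u) * (psi A lam u) ^ (4 * k - 1)
            = (psi A lam u) ^ (1 + (4 * k - 1)) := by rw [pow_add, pow_one]
        _ = 1 := by rw [show 1 + (4 * k - 1) = 4 * k by omega, hpsi4k]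
      have hST : (psi A lam u) ^ (4 * k - 1) * (psi A lam u) = 1 := by
        calc (psi A lam u) ^ (4 * k - 1) * (psi A lam u)
            = (psi A lam u) ^ ((4 * k - 1) + 1) := by rw [pow_add, pow_one]
        _ = 1 := by rw [show (4 * k - 1) + 1 = 4 * k by omega, hpsi4k]
      have hUK : (psi A lam u) '' K = K :=
        image_eq_of_gauge_eq hKcomp hKconv h0 _ _ hTS hgeq
      have hcommAu : psi A lam u ∘ₗ A = A ∘ₗ psi A lam u := by
        have h₁ : psi A lam u * psi A lam lam = psi A lam lam * psi A lam u := by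
          rw [← psi_mul him hA2 hlam2, ← psi_mul him hA2 hlam2, mul_comm]
        rw [psi_lam him] at h₁
        rw [← Module.End.mul_eq_comp, ← Module.End.mul_eq_comp]
        exact h₁
      by_cases hk0 : k % 4 = 0
      · have ha2 : a = 2 := by rw [ha, if_neg hk2, if_pos hk0]
        refine ⟨psi A lam u, ?_, ?_, hcommAu, hUK⟩
        · rw [ha2, ← psi_pow him hA2 hlam2, u_pow_2k_of_even (by omega) hord hu2, psi_one him]
        · intro j hj0 hjlt hj1
          rw [ha2] at hjlt
          rw [← psi_pow him hA2 hlam2] at hj1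
          have huj : u ^ j = 1 := psi_inj him hq (hj1.trans (psi_one him).symm)
          exact u_exact_0mod4 hk hk0 hm hord hu2 j hj0 hjlt huj
      · have hkodd : k % 2 = 1 := by omega
        have ha4 : a = 4 := by rw [ha, if_neg hk2, if_neg hk0]
        refine ⟨psi A lam u, ?_, ?_, hcommAu, hUK⟩
        · rw [ha4, ← psi_pow him hA2 hlam2, u_pow_4k hord hu2, psi_one him]
        · intro j hj0 hjlt hj1
          rw [ha4] at hjlt
          rw [← psi_pow him hA2 hlam2] at hj1
          have huj : u ^ j = 1 := psi_inj him hq (hj1.trans (psi_one him).symm)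
          exact u_exact_odd hk hkodd hm hord hu2 j hj0 hjlt huj
  · rintro ⟨C, hC1, hCj, hCcomm, hCK⟩
    have hapos : 0 < a := by rw [ha]; split_ifs <;> norm_num
    have hakpos : 0 < a * k := Nat.mul_pos hapos (by omega)
    obtain ⟨z, hCz⟩ := centralizer him hq C
      (by rw [Module.End.mul_eq_comp, Module.End.mul_eq_comp]; exact hCcomm)
    have hCpow : ∀ n : ℕ, C ^ n = psi A lam (z ^ n) := by
      intro n
      rw [hCz, psi_pow him hA2 hlam2]
    have hzak : z ^ (a * k) = 1 := by
      apply psi_inj him hq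
      rw [← hCpow, hC1, psi_one him]
    have hzj : ∀ j : ℕ, 0 < j → j < a * k → z ^ j ≠ 1 := by
      intro j h1 h2 hj
      exact hCj j h1 h2 (by rw [hCpow j, hj, psi_one him])
    have hzord : orderOf z = a * k :=
      (orderOf_eq_iff hakpos).2 ⟨hzak, fun j hjlt hj0 => hzj j hj0 hjlt⟩
    have hzprim : IsPrimitiveRoot z (a * k) := hzord ▸ IsPrimitiveRoot.orderOf z
    have hu_ak : u ^ (a * k) = 1 := by
      by_cases hk2 : k % 4 = 2
      · rw [ha, if_pos hk2, one_mul]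
        exact u_pow_k_of_2mod4 hk2 hm hord hu2
      · by_cases hk0 : k % 4 = 0
        · rw [ha, if_neg hk2, if_pos hk0]
          exact u_pow_2k_of_even (by omega) hord hu2
        · rw [ha, if_neg hk2, if_neg hk0]
          exact u_pow_4k hord hu2
    haveI : NeZero (a * k) := ⟨by omega⟩
    obtain ⟨i, hilt, hzi⟩ := hzprim.eq_pow_of_pow_eq_one hu_ak
    have hCiu : psi A lam u = C ^ i := by rw [hCpow i, hzi]
    have hCiK : ∀ n : ℕ, (C ^ n) '' K = K := by
      intro n
      induction n with
      | zero =>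
        rw [pow_zero]
        have h : ((1 : (ℝ × ℝ) →ₗ[ℝ] (ℝ × ℝ)) : (ℝ × ℝ) → (ℝ × ℝ)) = id := rfl
        rw [h, Set.image_id]
      | succ n ih =>
        rw [pow_succ]
        have h : ((C ^ n * C : (ℝ × ℝ) →ₗ[ℝ] (ℝ × ℝ)) : (ℝ × ℝ) → (ℝ × ℝ))
            = (C ^ n : (ℝ × ℝ) →ₗ[ℝ] (ℝ × ℝ)) ∘ (C : (ℝ × ℝ) →ₗ[ℝ] (ℝ × ℝ)) := rfl
        rw [h, Set.image_comp, hCK, ih]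
    have hCC1 : C * C ^ (a * k - 1) = 1 := by
      calc C * C ^ (a * k - 1) = C ^ (1 + (a * k - 1)) := by rw [pow_add, pow_one]
      _ = 1 := by rw [show 1 + (a * k - 1) = a * k by omega, hC1]
    have hCC2 : C ^ (a * k - 1) * C = 1 := by
      calc C ^ (a * k - 1) * C = C ^ ((a * k - 1) + 1) := by rw [pow_add, pow_one]
      _ = 1 := by rw [show (a * k - 1) + 1 = a * k by omega, hC1]
    have hcomm' : Commute C (C ^ (a * k - 1)) := (Commute.refl C).pow_right _
    have hTS : C ^ i * (C ^ (a * k - 1)) ^ i = 1 := by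
      rw [← hcomm'.mul_pow, hCC1, one_pow]
    have hST : (C ^ (a * k - 1)) ^ i * C ^ i = 1 := by
      rw [← (hcomm'.symm).mul_pow, hCC2, one_pow]
    refine ⟨r, fun x hx => ?_⟩
    rw [happly x, gauge_smul_of_nonneg hrpos.le, smul_eq_mul, hCiu]
    have hfr : (C ^ i) x ∈ frontier K :=
      frontier_map (C ^ i) ((C ^ (a * k - 1)) ^ i) hTS hST (hCiK i) hx
    rw [(gfront hKcomp hKconv h0 _).1 hfr, mul_one]
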